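/- Fix γ > 0 and conjugate exponents p, q > 1 with 1/p + 1/q = 1. Let (x,v) be a solution of the leader-based system ẋ_i = v_i, v̇_i = (1/N) Σ_{j=1}^N a(‖x_i − x_j‖)(v_j − v_i) + γ(v̄_i(t) − v_i(t)), where each agent computes the local average v̄_i(t) = (1/p) v_i(t) + (1/q) v_1(t). Then the functional V(t) = B(v(t),v(t)) satisfies d/dt V(t) ≤ −(2γ/q) V(t) for all t ≥ 0; hence V(t) ≤ V(0) e^{−2γ t/q}, and the system tends to consensus for every q > 0. -/

import Mathlib

open scoped BigOperators InnerProductSpace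
open MeasureTheory Filter

/-- The symmetric bilinear form `B(v,w) = (1/(2N²)) ∑ᵢ∑ⱼ (vᵢ-vⱼ)·(wᵢ-wⱼ)`. -/
noncomputable def bform {d N : ℕ} (v w : Fin N → EuclideanSpace ℝ (Fin d)) : ℝ :=
  (2 * (N : ℝ) ^ 2)⁻¹ * ∑ i, ∑ j, ⟪v i - v j, w i - w j⟫_ℝ

/-- The mean of `N` vectors. -/
noncomputable def meanVec {d N : ℕ} (v : Fin N → EuclideanSpace ℝ (Fin d)) :
    EuclideanSpace ℝ (Fin d) :=
  (N : ℝ)⁻¹ • ∑ i, v i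

section Aux

variable {d N : ℕ}

lemma diss_aux (A : Fin N → Fin N → ℝ) (hAs : ∀ i j, A i j = A j i)
    (hA0 : ∀ i j, 0 ≤ A i j) (v : Fin N → EuclideanSpace ℝ (Fin d)) :
    ∑ i, ∑ j, ⟪v i - v j,
      ((N:ℝ)⁻¹ • ∑ k, A i k • (v k - v i)) - ((N:ℝ)⁻¹ • ∑ k, A j k • (v k - v j))⟫_ℝ ≤ 0 := by
  set F : Fin N → EuclideanSpace ℝ (Fin d) :=
    fun i => (N:ℝ)⁻¹ • ∑ k, A i k • (v k - v i) with hF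
  have step1 : ∑ i, ∑ j, ⟪v i - v j, F i - F j⟫_ℝ
      = 2 * ∑ i, ∑ j, ⟪v i - v j, F i⟫_ℝ := by
    have : ∀ i j, ⟪v i - v j, F i - F j⟫_ℝ = ⟪v i - v j, F i⟫_ℝ + ⟪v j - v i, F j⟫_ℝ := by
      intro i j
      rw [inner_sub_right]
      have : ⟪v j - v i, F j⟫_ℝ = -⟪v i - v j, F j⟫_ℝ := by
        rw [← inner_neg_left]; congr 1; abel
      rw [this]; ring
    simp_rw [this, Finset.sum_add_distrib]
    rw [Finset.sum_comm (f := fun i j => ⟪v j - v i, F j⟫_ℝ)]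
    ring
  rw [step1]
  have step2 : ∀ i, ∑ j, ⟪v i - v j, F i⟫_ℝ
      = (N:ℝ)⁻¹ * ∑ k, A i k * ⟪∑ j, (v i - v j), v k - v i⟫_ℝ := by
    intro i
    rw [← sum_inner, hF]
    simp only [real_inner_smul_right, inner_sum, Finset.mul_sum]
  simp_rw [step2]
  rw [← Finset.mul_sum]
  set G : Fin N → Fin N → ℝ := fun i k => A i k * ⟪∑ j, (v i - v j), v k - v i⟫_ℝ with hG
  have key : ∑ i, ∑ k, G i k ≤ 0 := by
    have h2 : 2 * ∑ i, ∑ k, G i k = ∑ i, ∑ k, (G i k + G k i) := by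
      simp_rw [Finset.sum_add_distrib]
      rw [Finset.sum_comm (f := fun i k => G k i)]
      ring
    have hterm : ∀ i k, G i k + G k i ≤ 0 := by
      intro i k
      have hsum : (∑ j, (v i - v j)) - (∑ j, (v k - v j)) = (N:ℝ) • (v i - v k) := by
        rw [← Finset.sum_sub_distrib]
        have : ∀ j, (v i - v j) - (v k - v j) = v i - v k := fun j => by abel
        simp_rw [this, Finset.sum_const, Finset.card_univ, Fintype.card_fin,
          ← Nat.cast_smul_eq_nsmul ℝ]
      have : G i k + G k i = A i k * ⟪(∑ j, (v i - v j)) - (∑ j, (v k - v j)), v k - v i⟫_ℝ := by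
        rw [hG]
        simp only []
        rw [hAs k i]
        have : ⟪∑ j, (v k - v j), v i - v k⟫_ℝ = -⟪∑ j, (v k - v j), v k - v i⟫_ℝ := by
          rw [← inner_neg_right]; congr 1; abel
        rw [this, inner_sub_left]; ring
      rw [this, hsum]
      have : ⟪(N:ℝ) • (v i - v k), v k - v i⟫_ℝ = -((N:ℝ) * ‖v i - v k‖^2) := by
        rw [real_inner_smul_left]
        have : ⟪v i - v k, v k - v i⟫_ℝ = -‖v i - v k‖^2 := by
          rw [show v k - v i = -(v i - v k) by abel, inner_neg_right,
            real_inner_self_eq_norm_sq]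
        rw [this]; ring
      rw [this]
      have := mul_nonneg (hA0 i k) (mul_nonneg (Nat.cast_nonneg N) (sq_nonneg ‖v i - v k‖))
      nlinarith
    have hsum : ∑ i, ∑ k, (G i k + G k i) ≤ 0 :=
      Finset.sum_nonpos fun i _ => Finset.sum_nonpos fun k _ => hterm i k
    linarith
  have hN' : (0:ℝ) ≤ (N:ℝ)⁻¹ := by positivity
  nlinarith [mul_nonneg hN' (neg_nonneg.mpr key)]

lemma bform_nonneg (w : Fin N → EuclideanSpace ℝ (Fin d)) : 0 ≤ bform w w := by
  unfold bform
  refine mul_nonneg (by positivity) ?_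
  exact Finset.sum_nonneg fun i _ => Finset.sum_nonneg fun j _ => real_inner_self_nonneg

lemma bform_eq (w : Fin N → EuclideanSpace ℝ (Fin d)) :
    bform w w = (2*(N:ℝ)^2)⁻¹ * ∑ i, ∑ j, ‖w i - w j‖^2 := by
  unfold bform
  congr 1
  exact Finset.sum_congr rfl fun i _ => Finset.sum_congr rfl fun j _ =>
    real_inner_self_eq_norm_sq _

lemma bound_mean (hN : 0 < N) (w : Fin N → EuclideanSpace ℝ (Fin d)) (i : Fin N) :
    ‖w i - meanVec w‖ ≤ (N:ℝ) * Real.sqrt 2 * Real.sqrt (bform w w) := by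
  have hNpos : (0:ℝ) < N := Nat.cast_pos.mpr hN
  have h1 : w i - meanVec w = (N:ℝ)⁻¹ • ∑ j, (w i - w j) := by
    unfold meanVec
    rw [Finset.sum_sub_distrib, Finset.sum_const, Finset.card_univ, Fintype.card_fin, smul_sub]
    congr 1
    rw [← Nat.cast_smul_eq_nsmul ℝ, smul_smul, inv_mul_cancel₀ hNpos.ne', one_smul]
  have h2 : ∀ j, ‖w i - w j‖ ≤ Real.sqrt 2 * (N:ℝ) * Real.sqrt (bform w w) := by
    intro j
    have hle : ‖w i - w j‖^2 ≤ ∑ i', ∑ j', ‖w i' - w j'‖^2 := by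
      have ha := Finset.single_le_sum (f := fun i' => ∑ j', ‖w i' - w j'‖^2)
        (fun i' _ => Finset.sum_nonneg fun j' _ => sq_nonneg _) (Finset.mem_univ i)
      have hb := Finset.single_le_sum (f := fun j' => ‖w i - w j'‖^2)
        (fun j' _ => sq_nonneg _) (Finset.mem_univ j)
      simpa using ha.trans' hb
    have h3 : ‖w i - w j‖^2 ≤ 2*(N:ℝ)^2 * bform w w := by
      rw [bform_eq, ← mul_assoc, mul_inv_cancel₀ (by positivity), one_mul]
      exact hle
    calc ‖w i - w j‖ = Real.sqrt (‖w i - w j‖^2) := (Real.sqrt_sq (norm_nonneg _)).symm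
      _ ≤ Real.sqrt (2*(N:ℝ)^2 * bform w w) := Real.sqrt_le_sqrt h3
      _ = Real.sqrt 2 * (N:ℝ) * Real.sqrt (bform w w) := by
          rw [Real.sqrt_mul (by positivity : (0:ℝ) ≤ 2*(N:ℝ)^2),
            Real.sqrt_mul (by norm_num : (0:ℝ) ≤ 2), Real.sqrt_sq hNpos.le]
  have h4 : ‖∑ j, (w i - w j)‖ ≤ (N:ℝ) * (Real.sqrt 2 * (N:ℝ) * Real.sqrt (bform w w)) := by
    calc ‖∑ j, (w i - w j)‖ ≤ ∑ j, ‖w i - w j‖ := norm_sum_le _ _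
      _ ≤ ∑ _j : Fin N, Real.sqrt 2 * (N:ℝ) * Real.sqrt (bform w w) :=
          Finset.sum_le_sum fun j _ => h2 j
      _ = (N:ℝ) * (Real.sqrt 2 * (N:ℝ) * Real.sqrt (bform w w)) := by
          rw [Finset.sum_const, Finset.card_univ, Fintype.card_fin, nsmul_eq_mul]
  rw [h1, norm_smul]
  have hnn : ‖(N:ℝ)⁻¹‖ = (N:ℝ)⁻¹ := by
    rw [Real.norm_eq_abs, abs_of_nonneg (by positivity)]
  rw [hnn]
  calc (N:ℝ)⁻¹ * ‖∑ j, (w i - w j)‖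
      ≤ (N:ℝ)⁻¹ * ((N:ℝ) * (Real.sqrt 2 * (N:ℝ) * Real.sqrt (bform w w))) :=
        mul_le_mul_of_nonneg_left h4 (by positivity)
    _ = (N:ℝ) * Real.sqrt 2 * Real.sqrt (bform w w) := by
        rw [← mul_assoc, inv_mul_cancel₀ hNpos.ne', one_mul]
        ring

end Aux

/-- Leader-based feedback: if every agent uses the local average
`v̄ᵢ = (1/p)vᵢ + (1/q)v₁`, then `dV/dt ≤ -(2γ/q)V`, hence `V(t) ≤ V(0)e^{-2γt/q}`
and the system tends to consensus for every `q`. -/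
theorem leaderFeedback_consensus
    {d N : ℕ} (hN : 0 < N)
    (a : ℝ → ℝ)
    (ha_pos : ∀ r, 0 ≤ r → 0 < a r)
    (ha_mono : ∀ r s, 0 ≤ r → r ≤ s → a s ≤ a r)
    (ha_bdd : ∃ C, ∀ r, 0 ≤ r → a r ≤ C)
    (ha_lip : ∃ K : NNReal, LipschitzWith K a)
    (γ : ℝ) (hγ : 0 < γ)
    (p q : ℝ) (hp : 1 < p) (hq : 1 < q) (hpq : 1 / p + 1 / q = 1)
    (x v : ℝ → Fin N → EuclideanSpace ℝ (Fin d))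
    (hx : ∀ (i : Fin N), ∀ t, 0 ≤ t → HasDerivAt (fun s => x s i) (v t i) t)
    (hv : ∀ (i : Fin N), ∀ t, 0 ≤ t → HasDerivAt (fun s => v s i)
      ((N : ℝ)⁻¹ • ∑ j, a ‖x t i - x t j‖ • (v t j - v t i)
        + γ • (((1 / p) • v t i + (1 / q) • v t ⟨0, hN⟩) - v t i)) t) :
    (∀ t, 0 ≤ t → ∃ V' : ℝ, HasDerivAt (fun s => bform (v s) (v s)) V' t ∧
      V' ≤ -(2 * γ / q) * bform (v t) (v t)) ∧
    (∀ t, 0 ≤ t → bform (v t) (v t) ≤ bform (v 0) (v 0) * Real.exp (-(2 * γ / q) * t)) ∧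
    ∀ i, Tendsto (fun t => ‖v t i - meanVec (v t)‖) atTop (nhds 0) := by
  have hq0 : (0:ℝ) < q := lt_trans one_pos hq
  have hc : (0:ℝ) < 2 * γ / q := by positivity
  -- Part 1: the differential inequality
  have H : ∀ t, 0 ≤ t → ∃ V' : ℝ, HasDerivAt (fun s => bform (v s) (v s)) V' t ∧
      V' ≤ -(2 * γ / q) * bform (v t) (v t) := by
    intro t ht
    set W : Fin N → EuclideanSpace ℝ (Fin d) := fun i =>
      (N : ℝ)⁻¹ • ∑ j, a ‖x t i - x t j‖ • (v t j - v t i)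
        + γ • (((1 / p) • v t i + (1 / q) • v t ⟨0, hN⟩) - v t i) with hW
    have hvW : ∀ i, HasDerivAt (fun s => v s i) (W i) t := fun i => hv i t ht
    refine ⟨(2*(N:ℝ)^2)⁻¹ * ∑ i, ∑ j, (2 * ⟪v t i - v t j, W i - W j⟫_ℝ), ?_, ?_⟩
    · simp only [bform]
      apply HasDerivAt.const_mul
      apply HasDerivAt.fun_sum
      intro i _
      apply HasDerivAt.fun_sum
      intro j _
      have h1 : HasDerivAt (fun s => v s i - v s j) (W i - W j) t := (hvW i).sub (hvW j)
      have h2 := h1.inner ℝ h1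
      have h3 : ⟪v t i - v t j, W i - W j⟫_ℝ + ⟪W i - W j, v t i - v t j⟫_ℝ
          = 2 * ⟪v t i - v t j, W i - W j⟫_ℝ := by
        rw [real_inner_comm (W i - W j)]; ring
      rw [← h3]
      exact h2
    · -- the bound
      set F : Fin N → EuclideanSpace ℝ (Fin d) := fun i =>
        (N : ℝ)⁻¹ • ∑ j, a ‖x t i - x t j‖ • (v t j - v t i) with hF
      have hWF : ∀ i j, W i - W j = (F i - F j) - (γ/q) • (v t i - v t j) := by
        intro i j
        have h1p : (1:ℝ)/p = 1 - 1/q := by linarith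
        rw [hW, hF]
        simp only [h1p]
        match_scalars <;> field_simp <;> ring
      have hin : ∀ i j, (2:ℝ) * ⟪v t i - v t j, W i - W j⟫_ℝ
          = 2 * ⟪v t i - v t j, F i - F j⟫_ℝ - (2*γ/q) * ‖v t i - v t j‖^2 := by
        intro i j
        rw [hWF i j, inner_sub_right, real_inner_smul_right, real_inner_self_eq_norm_sq]
        ring
      have hsplit : ∑ i, ∑ j, (2 * ⟪v t i - v t j, W i - W j⟫_ℝ)
          = (∑ i, ∑ j, 2 * ⟪v t i - v t j, F i - F j⟫_ℝ)
            - (2*γ/q) * ∑ i, ∑ j, ‖v t i - v t j‖^2 := by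
        simp_rw [hin, Finset.sum_sub_distrib, ← Finset.mul_sum]
      have hT1 : ∑ i, ∑ j, 2 * ⟪v t i - v t j, F i - F j⟫_ℝ ≤ 0 := by
        have hd := diss_aux (fun i k => a ‖x t i - x t k‖)
          (fun i k => by
            show a ‖x t i - x t k‖ = a ‖x t k - x t i‖; rw [norm_sub_rev]) (fun i k => (ha_pos _ (norm_nonneg _)).le) (v t)
        have : ∑ i, ∑ j, 2 * ⟪v t i - v t j, F i - F j⟫_ℝ
            = 2 * ∑ i, ∑ j, ⟪v t i - v t j, F i - F j⟫_ℝ := by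
          simp_rw [← Finset.mul_sum]
        rw [this]
        nlinarith [hd]
      rw [hsplit, bform_eq]
      have hc0 : (0:ℝ) ≤ (2*(N:ℝ)^2)⁻¹ := by positivity
      have := mul_nonpos_of_nonneg_of_nonpos hc0 hT1
      nlinarith [this]
  set c : ℝ := 2 * γ / q with hcdef
  have H2 : ∀ t, 0 ≤ t → bform (v t) (v t) ≤ bform (v 0) (v 0) * Real.exp (-c * t) := by
    intro t ht
    set Vf : ℝ → ℝ := fun s => bform (v s) (v s) with hVf
    set g : ℝ → ℝ := fun s => Vf s * Real.exp (c * s) with hg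
    have hgd : ∀ s, 0 ≤ s → ∃ g', HasDerivAt g g' s ∧ g' ≤ 0 := by
      intro s hs
      obtain ⟨V', hd, hb⟩ := H s hs
      have he : HasDerivAt (fun u => Real.exp (c * u)) (Real.exp (c * s) * c) s := by
        simpa using (((hasDerivAt_id s).const_mul c).exp)
      refine ⟨V' * Real.exp (c * s) + Vf s * (Real.exp (c * s) * c), hd.mul he, ?_⟩
      have hE : (0:ℝ) < Real.exp (c * s) := Real.exp_pos _
      have : V' ≤ -c * Vf s := hb
      nlinarith
    have mono : AntitoneOn g (Set.Icc 0 t) := by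
      apply antitoneOn_of_deriv_nonpos (convex_Icc 0 t)
      · intro s hs
        obtain ⟨g', hd, _⟩ := hgd s hs.1
        exact hd.continuousAt.continuousWithinAt
      · intro s hs
        rw [interior_Icc] at hs
        obtain ⟨g', hd, _⟩ := hgd s hs.1.le
        exact hd.differentiableAt.differentiableWithinAt
      · intro s hs
        rw [interior_Icc] at hs
        obtain ⟨g', hd, hb⟩ := hgd s hs.1.le
        rw [hd.deriv]; exact hb
    have hgt : g t ≤ g 0 := mono (Set.left_mem_Icc.mpr ht) (Set.right_mem_Icc.mpr ht) ht
    have hg0 : g 0 = Vf 0 := by simp [hg]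
    have hgt' : Vf t * Real.exp (c * t) ≤ Vf 0 := by
      rw [← hg0]; exact hgt
    have hE : (0:ℝ) < Real.exp (c * t) := Real.exp_pos _
    have hinv : Real.exp (-c * t) * Real.exp (c * t) = 1 := by
      rw [← Real.exp_add]; ring_nf; exact Real.exp_zero
    have key := mul_le_mul_of_nonneg_right hgt' (Real.exp_pos (-c * t)).le
    have heq : Vf t * Real.exp (c * t) * Real.exp (-c * t) = Vf t := by
      rw [mul_assoc, mul_comm (Real.exp (c * t)), hinv, mul_one]
    calc bform (v t) (v t) = Vf t := rfl
      _ = Vf t * Real.exp (c * t) * Real.exp (-c * t) := heq.symm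
      _ ≤ Vf 0 * Real.exp (-c * t) := key
      _ = bform (v 0) (v 0) * Real.exp (-c * t) := rfl
  refine ⟨H, H2, ?_⟩
  intro i
  have hV0 : Tendsto (fun t => bform (v t) (v t)) atTop (nhds 0) := by
    apply squeeze_zero' (Filter.Eventually.of_forall fun t => bform_nonneg (v t))
    · filter_upwards [Filter.eventually_ge_atTop (0:ℝ)] with t ht
      exact H2 t ht
    · have h1 : Tendsto (fun t : ℝ => -c * t) atTop atBot :=
        Tendsto.const_mul_atTop_of_neg (by linarith : -c < 0) tendsto_id
      have h2 : Tendsto (fun t : ℝ => Real.exp (-c * t)) atTop (nhds 0) :=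
        Real.tendsto_exp_atBot.comp h1
      have := h2.const_mul (bform (v 0) (v 0))
      simpa using this
  have hsq : Tendsto (fun t => (N:ℝ) * Real.sqrt 2 * Real.sqrt (bform (v t) (v t)))
      atTop (nhds 0) := by
    have := (hV0.sqrt).const_mul ((N:ℝ) * Real.sqrt 2)
    simpa using this
  apply squeeze_zero' (Filter.Eventually.of_forall fun t => norm_nonneg _) _ hsq
  exact Filter.Eventually.of_forall fun t => bound_mean hN (v t) i
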